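/- arXiv:1910.07325 — 3 statements merged into one kernel-verified Lean document; each statement's English description precedes it below -/
import Mathlib

section
/- If U and V are independent uniform random variables on [0,1], then the random variable (U - V)^2 has probability density function z ↦ (1 - √z)/√z on (0,1). -/
open MeasureTheory ProbabilityTheory

section Aux
open MeasureTheory Set intervalIntegral
open Set intervalIntegral MeasureTheory

lemma intA {s : ℝ} (h0 : 0 ≤ s) (h1 : s ≤ 1) :
    ∫ x in (0:ℝ)..1, (min 1 (x+s) - max 0 (x-s)) = 2*s - s^2 := by
  have hmin : Continuous fun x : ℝ => min 1 (x+s) :=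
    continuous_const.min (continuous_id.add continuous_const)
  have hmax : Continuous fun x : ℝ => max 0 (x-s) :=
    continuous_const.max (continuous_id.sub continuous_const)
  have hlin : ∀ c : ℝ, ∀ a b : ℝ, ∫ x in a..b, (x + c) = (b^2 - a^2)/2 + c*(b-a) := by
    intro c a b
    rw [intervalIntegral.integral_add intervalIntegrable_id (_root_.intervalIntegrable_const),
      integral_id, intervalIntegral.integral_const, smul_eq_mul]
    ring
  have hsplit1 : ∫ x in (0:ℝ)..1, min 1 (x+s)
      = (∫ x in (0:ℝ)..(1-s), min 1 (x+s)) + ∫ x in (1-s)..1, min 1 (x+s) :=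
    (intervalIntegral.integral_add_adjacent_intervals
      (hmin.intervalIntegrable _ _) (hmin.intervalIntegrable _ _)).symm
  have hsplit2 : ∫ x in (0:ℝ)..1, max 0 (x-s)
      = (∫ x in (0:ℝ)..s, max 0 (x-s)) + ∫ x in s..1, max 0 (x-s) :=
    (intervalIntegral.integral_add_adjacent_intervals
      (hmax.intervalIntegrable _ _) (hmax.intervalIntegrable _ _)).symm
  have e1 : ∫ x in (0:ℝ)..(1-s), min 1 (x+s) = ∫ x in (0:ℝ)..(1-s), (x+s) := by
    refine intervalIntegral.integral_congr fun x hx => ?_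
    rw [uIcc_of_le (by linarith)] at hx
    exact min_eq_right (by rcases hx with ⟨_, h⟩; linarith)
  have e2 : ∫ x in (1-s:ℝ)..1, min 1 (x+s) = ∫ x in (1-s:ℝ)..1, (1:ℝ) := by
    refine intervalIntegral.integral_congr fun x hx => ?_
    rw [uIcc_of_le (by linarith)] at hx
    exact min_eq_left (by rcases hx with ⟨h, _⟩; linarith)
  have e3 : ∫ x in (0:ℝ)..s, max 0 (x-s) = ∫ x in (0:ℝ)..s, (0:ℝ) := by
    refine intervalIntegral.integral_congr fun x hx => ?_
    rw [uIcc_of_le (by linarith)] at hx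
    exact max_eq_left (by rcases hx with ⟨_, h⟩; linarith)
  have e4 : ∫ x in (s:ℝ)..1, max 0 (x-s) = ∫ x in (s:ℝ)..1, (x + (-s)) := by
    refine intervalIntegral.integral_congr fun x hx => ?_
    rw [uIcc_of_le (by linarith)] at hx
    rcases hx with ⟨h, _⟩
    rw [max_eq_right (by linarith)]; ring
  rw [intervalIntegral.integral_sub (hmin.intervalIntegrable _ _) (hmax.intervalIntegrable _ _),
    hsplit1, hsplit2, e1, e2, e3, e4, hlin, hlin, intervalIntegral.integral_const, intervalIntegral.integral_const]
  simp only [smul_eq_mul]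
  ring

lemma intB {s : ℝ} (h1 : 1 ≤ s) :
    ∫ x in (0:ℝ)..1, (min 1 (x+s) - max 0 (x-s)) = 1 := by
  have : ∫ x in (0:ℝ)..1, (min 1 (x+s) - max 0 (x-s)) = ∫ x in (0:ℝ)..1, (1:ℝ) := by
    refine intervalIntegral.integral_congr fun x hx => ?_
    rw [uIcc_of_le (by norm_num)] at hx
    rcases hx with ⟨hx0, hx1⟩
    rw [min_eq_left (by linarith), max_eq_left (by linarith)]
    ring
  rw [this]; simp

lemma densInt {a : ℝ} (h0 : 0 ≤ a) (h1 : a ≤ 1) :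
    ∫⁻ z in Set.Ioc 0 a, ENNReal.ofReal ((1 - Real.sqrt z) / Real.sqrt z)
      = ENNReal.ofReal (2 * Real.sqrt a - a) := by
  have hg_int : IntegrableOn (fun z : ℝ => z ^ (-(1/2) : ℝ) - 1) (Ioc 0 a) volume := by
    have h := (intervalIntegral.intervalIntegrable_rpow' (a := 0) (b := a)
      (r := -(1/2)) (by norm_num)).sub (_root_.intervalIntegrable_const (c := (1:ℝ)))
    rwa [intervalIntegrable_iff_integrableOn_Ioc_of_le h0] at h
  have heq : EqOn (fun z : ℝ => z ^ (-(1/2) : ℝ) - 1)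
      (fun z => (1 - Real.sqrt z) / Real.sqrt z) (Ioc 0 a) := by
    intro z hz
    have hz0 : 0 < z := hz.1
    have hsz : 0 < Real.sqrt z := Real.sqrt_pos.mpr hz0
    have : z ^ (-(1/2) : ℝ) = (Real.sqrt z)⁻¹ := by
      rw [Real.sqrt_eq_rpow, ← Real.rpow_neg hz0.le]
    simp only [this]
    field_simp
  have hf_int : IntegrableOn (fun z : ℝ => (1 - Real.sqrt z) / Real.sqrt z) (Ioc 0 a) volume :=
    hg_int.congr_fun heq measurableSet_Ioc
  have hnn : 0 ≤ᵐ[volume.restrict (Ioc (0:ℝ) a)]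
      fun z => (1 - Real.sqrt z) / Real.sqrt z := by
    filter_upwards [ae_restrict_mem measurableSet_Ioc] with z hz
    simp only [Pi.zero_apply]
    have h1' : Real.sqrt z ≤ 1 := Real.sqrt_le_one.mpr (hz.2.trans h1)
    have : 0 < Real.sqrt z := Real.sqrt_pos.mpr hz.1
    exact div_nonneg (by linarith) this.le
  rw [← ofReal_integral_eq_lintegral_ofReal hf_int hnn]
  congr 1
  rw [← setIntegral_congr_fun measurableSet_Ioc heq,
    ← intervalIntegral.integral_of_le h0,
    intervalIntegral.integral_sub (intervalIntegral.intervalIntegrable_rpow' (by norm_num))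
      (_root_.intervalIntegrable_const), integral_rpow (Or.inl (by norm_num)),
    intervalIntegral.integral_const]
  have h2 : (-(1/2) : ℝ) + 1 = 1/2 := by norm_num
  rw [h2, Real.zero_rpow (by norm_num), ← Real.sqrt_eq_rpow]
  simp
  ring

lemma prodMeas {a : ℝ} (h0 : 0 ≤ a) :
    ((volume.restrict (Icc (0:ℝ) 1)).prod (volume.restrict (Icc (0:ℝ) 1)))
      {p : ℝ × ℝ | (p.1 - p.2)^2 ≤ a}
    = ENNReal.ofReal (∫ x in (0:ℝ)..1,
        (min 1 (x + Real.sqrt a) - max 0 (x - Real.sqrt a))) := by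
  set s := Real.sqrt a with hsdef
  have hs : 0 ≤ s := Real.sqrt_nonneg a
  have hSm : MeasurableSet {p : ℝ × ℝ | (p.1 - p.2)^2 ≤ a} :=
    measurableSet_le (by fun_prop) measurable_const
  rw [Measure.prod_apply hSm]
  have hslice : ∀ x : ℝ, (Prod.mk x ⁻¹' {p : ℝ × ℝ | (p.1 - p.2)^2 ≤ a})
      = Icc (x - s) (x + s) := by
    intro x; ext y
    simp only [mem_preimage, mem_setOf_eq, mem_Icc]
    constructor
    · intro h
      have habs : |x - y| ≤ s := by
        rw [← Real.sqrt_sq_eq_abs]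
        exact Real.sqrt_le_sqrt h
      rw [abs_le] at habs
      exact ⟨by linarith [habs.2], by linarith [habs.1]⟩
    · rintro ⟨hy1, hy2⟩
      have habs : |x - y| ≤ s := abs_le.mpr ⟨by linarith, by linarith⟩
      calc (x - y)^2 = |x - y|^2 := (sq_abs _).symm
        _ ≤ s^2 := pow_le_pow_left₀ (abs_nonneg _) habs 2
        _ = a := Real.sq_sqrt h0
  have hres : (fun x : ℝ => (volume.restrict (Icc (0:ℝ) 1))
        (Prod.mk x ⁻¹' {p : ℝ × ℝ | (p.1 - p.2)^2 ≤ a}))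
      = fun x => ENNReal.ofReal (min 1 (x + s) - max 0 (x - s)) := by
    funext x
    rw [hslice x, Measure.restrict_apply measurableSet_Icc, Icc_inter_Icc, Real.volume_Icc,
      min_comm, max_comm]
  rw [hres]
  have hcont : Continuous fun x : ℝ => min 1 (x + s) - max 0 (x - s) :=
    (continuous_const.min (continuous_id.add continuous_const)).sub
      (continuous_const.max (continuous_id.sub continuous_const))
  have hint : IntegrableOn (fun x : ℝ => min 1 (x + s) - max 0 (x - s)) (Icc 0 1) volume :=
    hcont.integrableOn_Icc
  have hnn : 0 ≤ᵐ[volume.restrict (Icc (0:ℝ) 1)]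
      fun x => min 1 (x + s) - max 0 (x - s) := by
    filter_upwards [ae_restrict_mem measurableSet_Icc] with x hx
    simp only [Pi.zero_apply]
    rcases hx with ⟨hx0, hx1⟩
    have : max 0 (x - s) ≤ min 1 (x + s) := by
      apply max_le
      · exact le_min (by norm_num) (by linarith)
      · exact le_min (by linarith) (by linarith)
    linarith
  rw [← ofReal_integral_eq_lintegral_ofReal hint hnn]
  congr 1
  rw [integral_Icc_eq_integral_Ioc, ← intervalIntegral.integral_of_le (by norm_num : (0:ℝ) ≤ 1)]

end Aux

/-- If U and V are independent uniform random variables on [0,1], then (U - V)^2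
has probability density function z ↦ (1 - √z)/√z on (0,1). -/
theorem sq_diff_uniform_density
    {Ω : Type*} [MeasureSpace Ω] [IsProbabilityMeasure (ℙ : Measure Ω)]
    (U V : Ω → ℝ) (hU : Measurable U) (hV : Measurable V)
    (hIndep : IndepFun U V ℙ)
    (hUunif : Measure.map U ℙ = volume.restrict (Set.Icc (0 : ℝ) 1))
    (hVunif : Measure.map V ℙ = volume.restrict (Set.Icc (0 : ℝ) 1)) :
    Measure.map (fun ω => (U ω - V ω) ^ 2) ℙ =
      (volume.restrict (Set.Ioo (0 : ℝ) 1)).withDensity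
        (fun z => ENNReal.ofReal ((1 - Real.sqrt z) / Real.sqrt z)) := by
  haveI hμ : IsProbabilityMeasure (volume.restrict (Set.Icc (0:ℝ) 1)) :=
    ⟨by simp [Real.volume_Icc]⟩
  set μ := volume.restrict (Set.Icc (0:ℝ) 1) with hμdef
  have hg : Measurable fun p : ℝ × ℝ => (p.1 - p.2)^2 := by fun_prop
  have hmapUV : Measure.map (fun ω => (U ω, V ω)) ℙ = μ.prod μ := by
    have h := (indepFun_iff_map_prod_eq_prod_map_map hU.aemeasurable hV.aemeasurable).mp hIndep
    rw [hUunif, hVunif] at h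
    exact h
  have hcomp : Measure.map (fun ω => (U ω - V ω)^2) ℙ
      = Measure.map (fun p : ℝ × ℝ => (p.1 - p.2)^2) (μ.prod μ) := by
    rw [← hmapUV, Measure.map_map hg (hU.prodMk hV)]
    rfl
  rw [hcomp]
  haveI : IsProbabilityMeasure (Measure.map (fun p : ℝ × ℝ => (p.1 - p.2)^2) (μ.prod μ)) :=
    Measure.isProbabilityMeasure_map hg.aemeasurable
  refine Measure.ext_of_Iic _ _ fun a => ?_
  rw [Measure.map_apply hg measurableSet_Iic, withDensity_apply _ measurableSet_Iic,
    Measure.restrict_restrict measurableSet_Iic]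
  have hpre : (fun p : ℝ × ℝ => (p.1 - p.2)^2) ⁻¹' (Set.Iic a)
      = {p : ℝ × ℝ | (p.1 - p.2)^2 ≤ a} := rfl
  rcases lt_or_ge a 0 with hneg | h0
  · rw [hpre]
    have h1 : {p : ℝ × ℝ | (p.1 - p.2)^2 ≤ a} = ∅ := by
      ext p
      simp only [Set.mem_setOf_eq, Set.mem_empty_iff_false, iff_false, not_le]
      exact lt_of_lt_of_le hneg (sq_nonneg _)
    have h2 : Set.Iic a ∩ Set.Ioo (0:ℝ) 1 = ∅ := by
      ext z
      simp only [Set.mem_inter_iff, Set.mem_Iic, Set.mem_Ioo, Set.mem_empty_iff_false, iff_false,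
        not_and]
      intro hz h0z
      exact fun _ => by linarith
    rw [h1, h2]
    simp
  · rw [hpre, hμdef, prodMeas h0]
    rcases lt_or_ge a 1 with h1 | h1
    · have h2 : Set.Iic a ∩ Set.Ioo (0:ℝ) 1 = Set.Ioc 0 a := by
        ext z
        simp only [Set.mem_inter_iff, Set.mem_Iic, Set.mem_Ioo, Set.mem_Ioc]
        constructor
        · rintro ⟨hza, h0z, _⟩; exact ⟨h0z, hza⟩
        · rintro ⟨h0z, hza⟩; exact ⟨hza, h0z, lt_of_le_of_lt hza h1⟩
      rw [h2, densInt h0 h1.le, intA (Real.sqrt_nonneg a)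
        (Real.sqrt_le_one.mpr h1.le), Real.sq_sqrt h0]
    · have hs1 : 1 ≤ Real.sqrt a := by
        rw [show (1:ℝ) = Real.sqrt 1 by simp]
        exact Real.sqrt_le_sqrt h1
      have h2 : Set.Iic a ∩ Set.Ioo (0:ℝ) 1 = Set.Ioo 0 1 := by
        ext z
        simp only [Set.mem_inter_iff, Set.mem_Iic, Set.mem_Ioo]
        constructor
        · rintro ⟨_, h⟩; exact h
        · rintro ⟨h0z, hz1⟩; exact ⟨by linarith, h0z, hz1⟩
      rw [h2, intB hs1, Measure.restrict_congr_set Ioo_ae_eq_Ioc, densInt zero_le_one le_rfl]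
      norm_num
end

section
/- Let X = (X_1,…,X_H) be a random vector with each coordinate uniformly distributed on [0,1], and let u ∈ [0,1]^H. Then E‖X - u‖₂ ≥ √H / 4. -/
open MeasureTheory ProbabilityTheory

lemma abs_int_lb (c : ℝ) (hc : c ∈ Set.Icc (0:ℝ) 1) :
    (1:ℝ)/4 ≤ ∫ x in Set.Icc (0:ℝ) 1, |x - c| := by
  obtain ⟨hc0, hc1⟩ := hc
  rw [MeasureTheory.integral_Icc_eq_integral_Ioc,
    ← intervalIntegral.integral_of_le (by norm_num : (0:ℝ) ≤ 1)]
  have h1 : IntervalIntegrable (fun x => |x - c|) volume 0 c :=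
    (continuous_abs.comp (continuous_id.sub continuous_const)).intervalIntegrable _ _
  have h2 : IntervalIntegrable (fun x => |x - c|) volume c 1 :=
    (continuous_abs.comp (continuous_id.sub continuous_const)).intervalIntegrable _ _
  rw [← intervalIntegral.integral_add_adjacent_intervals h1 h2]
  have e1 : (∫ x in (0:ℝ)..c, |x - c|) = ∫ x in (0:ℝ)..c, (c - x) := by
    apply intervalIntegral.integral_congr
    intro x hx
    rw [Set.uIcc_of_le hc0] at hx
    show |x - c| = c - x
    rw [abs_of_nonpos (by linarith [hx.2])]; ring
  have e2 : (∫ x in c..(1:ℝ), |x - c|) = ∫ x in c..(1:ℝ), (x - c) := by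
    apply intervalIntegral.integral_congr
    intro x hx
    rw [Set.uIcc_of_le hc1] at hx
    show |x - c| = x - c
    rw [abs_of_nonneg (by linarith [hx.1])]
  have v1 : (∫ x in (0:ℝ)..c, (c - x)) = c^2/2 := by
    rw [intervalIntegral.integral_sub intervalIntegrable_const
      (continuous_id'.intervalIntegrable _ _)]
    simp [integral_id]
    ring
  have v2 : (∫ x in c..(1:ℝ), (x - c)) = (1-c)^2/2 := by
    rw [intervalIntegral.integral_sub (continuous_id'.intervalIntegrable _ _)
      intervalIntegrable_const]
    simp [integral_id]
    ring
  rw [e1, e2, v1, v2]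
  nlinarith [sq_nonneg (c - 1/2)]

/-- Lemma 1 (lower bound): if each coordinate of X is uniform on [0,1] and
u ∈ [0,1]^H, then E‖X - u‖₂ ≥ √H / 4. -/
theorem expectation_euclidean_dist_ge
    {Ω : Type*} [MeasureSpace Ω] [IsProbabilityMeasure (ℙ : Measure Ω)]
    {H : ℕ} (X : Ω → Fin H → ℝ) (hX : Measurable X)
    (hXunif : ∀ h : Fin H,
      Measure.map (fun ω => X ω h) ℙ = volume.restrict (Set.Icc (0 : ℝ) 1))
    (u : Fin H → ℝ) (hu : ∀ h, u h ∈ Set.Icc (0 : ℝ) 1) :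
    Real.sqrt H / 4 ≤ ∫ ω, Real.sqrt (∑ h, (X ω h - u h) ^ 2) ∂ℙ := by
  set f : Ω → ℝ := fun ω => Real.sqrt (∑ h, (X ω h - u h) ^ 2) with hf
  have hXh : ∀ h : Fin H, Measurable fun ω => X ω h :=
    fun h => (measurable_pi_apply h).comp hX
  -- a.e. each coordinate lies in [0,1]
  have hae : ∀ᵐ ω ∂(ℙ : Measure Ω), ∀ h, X ω h ∈ Set.Icc (0:ℝ) 1 := by
    rw [MeasureTheory.ae_all_iff]
    intro h
    have hmap : (Measure.map (fun ω => X ω h) ℙ) (Set.Icc (0:ℝ) 1) = 1 := by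
      rw [hXunif h, Measure.restrict_apply measurableSet_Icc, Set.inter_self]
      simp [Real.volume_Icc]
    rw [Measure.map_apply (hXh h) measurableSet_Icc] at hmap
    have hcompl : ℙ ((fun ω => X ω h) ⁻¹' Set.Icc (0:ℝ) 1)ᶜ = 0 := by
      rw [measure_compl (measurableSet_preimage (hXh h) measurableSet_Icc)
        (measure_ne_top _ _), hmap]
      simp
    have hset : {ω | ¬ X ω h ∈ Set.Icc (0:ℝ) 1} =
        ((fun ω => X ω h) ⁻¹' Set.Icc (0:ℝ) 1)ᶜ := by
      ext ω; simp
    rw [MeasureTheory.ae_iff, hset]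
    exact hcompl
  -- measurability of f
  have hfm : Measurable f :=
    (Finset.measurable_sum _ fun h _ => ((hXh h).sub measurable_const).pow_const 2).sqrt
  -- f is a.e. bounded by √H
  have hfb : ∀ᵐ ω ∂(ℙ : Measure Ω), ‖f ω‖ ≤ Real.sqrt H := by
    filter_upwards [hae] with ω hω
    rw [Real.norm_eq_abs, abs_of_nonneg (Real.sqrt_nonneg _)]
    apply Real.sqrt_le_sqrt
    calc ∑ h, (X ω h - u h) ^ 2 ≤ ∑ _h : Fin H, (1:ℝ) := by
          apply Finset.sum_le_sum
          intro h _
          have h1 := hω h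
          have h2 := hu h
          nlinarith [h1.1, h1.2, h2.1, h2.2]
      _ = H := by simp
  have hfi : Integrable f ℙ :=
    (integrable_const (Real.sqrt H)).mono' hfm.aestronglyMeasurable hfb
  -- per-coordinate integrability and lower bound on the mean absolute deviation
  have habs : ∀ h : Fin H, Integrable (fun ω => |X ω h - u h|) ℙ ∧
      (1:ℝ)/4 ≤ ∫ ω, |X ω h - u h| ∂ℙ := by
    intro h
    have hcont : Continuous fun x : ℝ => |x - u h| :=
      continuous_abs.comp (continuous_id.sub continuous_const)
    have hint : Integrable (fun x : ℝ => |x - u h|)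
        (volume.restrict (Set.Icc (0:ℝ) 1)) :=
      ContinuousOn.integrableOn_compact isCompact_Icc hcont.continuousOn
    have hmapint : Integrable (fun x : ℝ => |x - u h|)
        (Measure.map (fun ω => X ω h) ℙ) := by rw [hXunif h]; exact hint
    have hcomp : Integrable (fun ω => |X ω h - u h|) ℙ := by
      rw [MeasureTheory.integrable_map_measure hcont.aestronglyMeasurable
        (hXh h).aemeasurable] at hmapint
      exact hmapint
    refine ⟨hcomp, ?_⟩
    have hchg := MeasureTheory.integral_map (μ := (ℙ : Measure Ω)) (hXh h).aemeasurable
      (f := fun x : ℝ => |x - u h|) hcont.aestronglyMeasurable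
    rw [hXunif h] at hchg
    rw [← hchg]
    exact abs_int_lb (u h) (hu h)
  -- pointwise Cauchy–Schwarz: ∑ |aₕ| ≤ √H · √(∑ aₕ²)
  have hcs : ∀ ω, (∑ h, |X ω h - u h|) ≤ Real.sqrt H * f ω := by
    intro ω
    have key : (∑ h, |X ω h - u h|) ^ 2 ≤
        (H : ℝ) * ∑ h, (X ω h - u h) ^ 2 := by
      have := sq_sum_le_card_mul_sum_sq
        (s := (Finset.univ : Finset (Fin H))) (f := fun h => |X ω h - u h|)
      simpa [sq_abs] using this
    have h0 : (0:ℝ) ≤ ∑ h, |X ω h - u h| :=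
      Finset.sum_nonneg fun h _ => abs_nonneg _
    have := (Real.le_sqrt h0 (by positivity)).2 key
    rwa [Real.sqrt_mul (by positivity : (0:ℝ) ≤ (H:ℝ))] at this
  have hsumint : Integrable (fun ω => ∑ h, |X ω h - u h|) ℙ :=
    integrable_finset_sum _ fun h _ => (habs h).1
  have hmono : (∫ ω, ∑ h, |X ω h - u h| ∂ℙ) ≤ Real.sqrt H * ∫ ω, f ω ∂ℙ := by
    rw [← integral_const_mul]
    exact integral_mono hsumint (hfi.const_mul _) hcs
  have hsum : (H:ℝ)/4 ≤ ∫ ω, ∑ h, |X ω h - u h| ∂ℙ := by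
    rw [integral_finset_sum _ fun h _ => (habs h).1]
    calc (H:ℝ)/4 = ∑ _h : Fin H, (1:ℝ)/4 := by simp; ring
      _ ≤ ∑ h, ∫ ω, |X ω h - u h| ∂ℙ :=
        Finset.sum_le_sum fun h _ => (habs h).2
  have hHle : (H:ℝ)/4 ≤ Real.sqrt H * ∫ ω, f ω ∂ℙ := le_trans hsum hmono
  rcases Nat.eq_zero_or_pos H with h0 | hpos
  · subst h0
    simp only [Nat.cast_zero, Real.sqrt_zero, zero_div]
    exact integral_nonneg fun ω => Real.sqrt_nonneg _
  · have hs : (0:ℝ) < Real.sqrt H := Real.sqrt_pos.2 (by exact_mod_cast hpos)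
    have hH : (H:ℝ) = Real.sqrt H * Real.sqrt H :=
      (Real.mul_self_sqrt (by positivity)).symm
    nlinarith [hHle, hs, hH]
end

section
/- For a real-valued random variable X with cumulative distribution function F and a real number y, the CRPS identity holds: ∫ (F(z) - 1{y < z})² dz = E|X - y| - (1/2)E|X - X̃|, where X̃ is an independent copy of X, provided E|X| < ∞. -/
open MeasureTheory ProbabilityTheory


noncomputable def ind (a z : ℝ) : ℝ := if a ≤ z then 1 else 0

lemma ind_sq (a z : ℝ) : ind a z ^ 2 = ind a z := by
  unfold ind; split <;> norm_num

lemma ind_sq_diff_eq (a b : ℝ) :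
    (fun z => (ind a z - ind b z) ^ 2)
      = Set.indicator (Set.Ico (min a b) (max a b)) (fun _ => (1 : ℝ)) := by
  funext z
  unfold ind
  rcases le_total a b with h | h
  · rw [min_eq_left h, max_eq_right h]
    by_cases h1 : a ≤ z <;> by_cases h2 : b ≤ z <;>
      simp_all [Set.indicator_apply, Set.mem_Ico] <;> first | linarith | (intro; linarith) | (rw [if_neg (by linarith), if_neg (by linarith)]; ring)
  · rw [min_eq_right h, max_eq_left h]
    by_cases h1 : a ≤ z <;> by_cases h2 : b ≤ z <;>
      simp_all [Set.indicator_apply, Set.mem_Ico] <;> first | linarith | (intro; linarith) | (rw [if_neg (by linarith), if_neg (by linarith)]; ring)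

lemma integral_ind_sq_diff (a b : ℝ) :
    ∫ z, (ind a z - ind b z) ^ 2 = |a - b| := by
  rw [ind_sq_diff_eq, integral_indicator_const (1 : ℝ) measurableSet_Ico]
  rw [measureReal_def, Real.volume_Ico, ENNReal.toReal_ofReal (by simp [min_le_max] : (0:ℝ) ≤ max a b - min a b)]
  rw [smul_eq_mul, mul_one]
  rw [show max a b = a ⊔ b from rfl, show min a b = a ⊓ b from rfl, max_sub_min_eq_abs, abs_sub_comm]

lemma integrable_ind_sq_diff (a b : ℝ) :
    Integrable (fun z => (ind a z - ind b z) ^ 2) (volume : Measure ℝ) := by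
  rw [ind_sq_diff_eq]
  exact (integrable_indicator_iff measurableSet_Ico).mpr
    (integrableOn_const measure_Ico_lt_top.ne)

section
variable {Ω : Type*} [MeasureSpace Ω] [IsProbabilityMeasure (ℙ : Measure Ω)]

lemma integral_ind_comp {X : Ω → ℝ} (hX : Measurable X) (z : ℝ) :
    ∫ ω, ind (X ω) z ∂ℙ = (ℙ {ω | X ω ≤ z}).toReal := by
  have hs : MeasurableSet {ω | X ω ≤ z} := hX measurableSet_Iic
  have : (fun ω => ind (X ω) z) = Set.indicator {ω | X ω ≤ z} (fun _ => (1:ℝ)) := by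
    funext ω; simp [ind, Set.indicator_apply, Set.mem_setOf_eq]
  rw [this, integral_indicator_const (1:ℝ) hs, smul_eq_mul, mul_one, measureReal_def]

lemma integrable_ind_comp {X : Ω → ℝ} (hX : Measurable X) (z : ℝ) :
    Integrable (fun ω => ind (X ω) z) ℙ := by
  have hs : MeasurableSet {ω | X ω ≤ z} := hX measurableSet_Iic
  have : (fun ω => ind (X ω) z) = Set.indicator {ω | X ω ≤ z} (fun _ => (1:ℝ)) := by
    funext ω; simp [ind, Set.indicator_apply, Set.mem_setOf_eq]
  rw [this]
  exact (integrable_indicator_iff hs).mpr (integrableOn_const (measure_lt_top _ _).ne)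

-- ∫ω (1{Xω≤z} - 1{y≤z})² = (F z - 1{y≤z})² + (F z - F z²)
lemma int_one {X : Ω → ℝ} (hX : Measurable X) (y z : ℝ) :
    ∫ ω, (ind (X ω) z - ind y z) ^ 2 ∂ℙ
      = ((ℙ {ω | X ω ≤ z}).toReal - ind y z) ^ 2
        + ((ℙ {ω | X ω ≤ z}).toReal - (ℙ {ω | X ω ≤ z}).toReal ^ 2) := by
  set c := ind y z with hc
  set F := (ℙ {ω | X ω ≤ z}).toReal with hF
  have key : (fun ω => (ind (X ω) z - c) ^ 2)
      = fun ω => (1 - 2 * c) * ind (X ω) z + c := by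
    funext ω
    have h1 := ind_sq (X ω) z
    have h2 := ind_sq y z
    nlinarith [h1, h2]
  rw [key, integral_add ((integrable_ind_comp hX z).const_mul _) (integrable_const c),
    integral_const_mul, integral_ind_comp hX z, integral_const]
  have h2 := ind_sq y z
  simp only [probReal_univ, measure_univ, ENNReal.toReal_one, smul_eq_mul, one_mul]
  nlinarith [h2]

lemma law_eq {X Xt : Ω → ℝ} (hX : Measurable X) (hXt : Measurable Xt)
    (hSameLaw : Measure.map Xt ℙ = Measure.map X ℙ) (z : ℝ) :
    ℙ {ω | Xt ω ≤ z} = ℙ {ω | X ω ≤ z} := by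
  have h1 : ℙ {ω | Xt ω ≤ z} = (Measure.map Xt ℙ) (Set.Iic z) := by
    rw [Measure.map_apply hXt measurableSet_Iic]; rfl
  have h2 : ℙ {ω | X ω ≤ z} = (Measure.map X ℙ) (Set.Iic z) := by
    rw [Measure.map_apply hX measurableSet_Iic]; rfl
  rw [h1, h2, hSameLaw]

-- ∫ω (1{Xω≤z} - 1{Xtω≤z})² = 2 (F z - F z²)
lemma int_two {X Xt : Ω → ℝ} (hX : Measurable X) (hXt : Measurable Xt)
    (hIndep : IndepFun X Xt ℙ)
    (hSameLaw : Measure.map Xt ℙ = Measure.map X ℙ) (z : ℝ) :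
    ∫ ω, (ind (X ω) z - ind (Xt ω) z) ^ 2 ∂ℙ
      = 2 * ((ℙ {ω | X ω ≤ z}).toReal - (ℙ {ω | X ω ≤ z}).toReal ^ 2) := by
  set F := (ℙ {ω | X ω ≤ z}).toReal with hF
  have hprodind : (fun ω => ind (X ω) z * ind (Xt ω) z)
      = Set.indicator (X ⁻¹' Set.Iic z ∩ Xt ⁻¹' Set.Iic z) (fun _ => (1:ℝ)) := by
    funext ω
    simp only [ind, Set.indicator_apply, Set.mem_inter_iff, Set.mem_preimage, Set.mem_Iic]
    by_cases h1 : X ω ≤ z <;> by_cases h2 : Xt ω ≤ z <;> simp [h1, h2]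
  have hsmeas : MeasurableSet (X ⁻¹' Set.Iic z ∩ Xt ⁻¹' Set.Iic z) :=
    (hX measurableSet_Iic).inter (hXt measurableSet_Iic)
  have hintprod : Integrable (fun ω => ind (X ω) z * ind (Xt ω) z) ℙ := by
    rw [hprodind]
    exact (integrable_indicator_iff hsmeas).mpr
      (integrableOn_const (measure_lt_top _ _).ne)
  have hmul : ∫ ω, ind (X ω) z * ind (Xt ω) z ∂ℙ = F * F := by
    rw [hprodind, integral_indicator_const (1:ℝ) hsmeas, smul_eq_mul, mul_one]
    rw [measureReal_def, hIndep.measure_inter_preimage_eq_mul _ _ measurableSet_Iic measurableSet_Iic]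
    have : (Xt ⁻¹' Set.Iic z) = {ω | Xt ω ≤ z} := rfl
    rw [ENNReal.toReal_mul, this, law_eq hX hXt hSameLaw z]
    rfl
  have key : (fun ω => (ind (X ω) z - ind (Xt ω) z) ^ 2)
      = fun ω => ind (X ω) z + ind (Xt ω) z - 2 * (ind (X ω) z * ind (Xt ω) z) := by
    funext ω
    have h1 := ind_sq (X ω) z
    have h2 := ind_sq (Xt ω) z
    nlinarith [h1, h2]
  rw [key]
  have hadd : Integrable (fun ω => ind (X ω) z + ind (Xt ω) z) ℙ :=
    (integrable_ind_comp hX z).add (integrable_ind_comp hXt z)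
  rw [integral_sub hadd
    (hintprod.const_mul 2), integral_add (integrable_ind_comp hX z) (integrable_ind_comp hXt z),
    integral_const_mul, integral_ind_comp hX z, integral_ind_comp hXt z, hmul,
    law_eq hX hXt hSameLaw z]
  ring

lemma integrable_prod_g {W V : Ω → ℝ} (hW : Measurable W) (hV : Measurable V)
    (hint : Integrable (fun ω => |W ω - V ω|) ℙ) :
    Integrable (fun p : Ω × ℝ => (ind (W p.1) p.2 - ind (V p.1) p.2) ^ 2)
      ((ℙ : Measure Ω).prod (volume : Measure ℝ)) := by
  have hmeas : Measurable (fun p : Ω × ℝ => (ind (W p.1) p.2 - ind (V p.1) p.2) ^ 2) := by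
    apply Measurable.pow _ measurable_const
    apply Measurable.sub
    · exact Measurable.ite (measurableSet_le (hW.comp measurable_fst) measurable_snd)
        measurable_const measurable_const
    · exact Measurable.ite (measurableSet_le (hV.comp measurable_fst) measurable_snd)
        measurable_const measurable_const
  rw [integrable_prod_iff hmeas.aestronglyMeasurable]
  constructor
  · exact Filter.Eventually.of_forall fun ω => integrable_ind_sq_diff (W ω) (V ω)
  · apply hint.congr
    apply Filter.Eventually.of_forall
    intro ω
    show |W ω - V ω| = ∫ z, ‖(ind (W ω) z - ind (V ω) z) ^ 2‖
    rw [← integral_ind_sq_diff (W ω) (V ω)]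
    apply integral_congr_ae
    apply Filter.Eventually.of_forall
    intro z
    simp only [Real.norm_eq_abs]
    exact (abs_of_nonneg (sq_nonneg _)).symm

lemma fubini_g {W V : Ω → ℝ} (hW : Measurable W) (hV : Measurable V)
    (hint : Integrable (fun ω => |W ω - V ω|) ℙ) :
    ∫ ω, |W ω - V ω| ∂ℙ = ∫ z, ∫ ω, (ind (W ω) z - ind (V ω) z) ^ 2 ∂ℙ := by
  have hswap := integral_integral_swap (f := fun ω z => (ind (W ω) z - ind (V ω) z) ^ 2)
    (integrable_prod_g hW hV hint)
  rw [← hswap]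
  exact integral_congr_ae (Filter.Eventually.of_forall fun ω => (integral_ind_sq_diff _ _).symm)
end

/-- The CRPS identity: for an integrable real random variable X with cdf F and an
independent copy X̃, and y ∈ ℝ,
∫ (F(z) - 1{y < z})² dz = E|X - y| - (1/2) E|X - X̃|. -/
theorem crps_identity
    {Ω : Type*} [MeasureSpace Ω] [IsProbabilityMeasure (ℙ : Measure Ω)]
    (X Xt : Ω → ℝ) (hX : Measurable X) (hXt : Measurable Xt)
    (hInt : Integrable X ℙ)
    (hIndep : IndepFun X Xt ℙ)
    (hSameLaw : Measure.map Xt ℙ = Measure.map X ℙ)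
    (y : ℝ) :
    ∫ z, ((ℙ {ω | X ω ≤ z}).toReal - (if y < z then (1 : ℝ) else 0)) ^ 2 =
      (∫ ω, |X ω - y| ∂ℙ) - (1 / 2) * ∫ ω, |X ω - Xt ω| ∂ℙ := by
  have hXtInt : Integrable Xt ℙ := by
    have h1 : Integrable id (Measure.map X ℙ) :=
      (integrable_map_measure aestronglyMeasurable_id hX.aemeasurable).mpr hInt
    rw [← hSameLaw] at h1
    exact (integrable_map_measure aestronglyMeasurable_id hXt.aemeasurable).mp h1
  have hint1 : Integrable (fun ω => |X ω - y|) ℙ := (hInt.sub (integrable_const y)).abs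
  have hint2 : Integrable (fun ω => |X ω - Xt ω|) ℙ := (hInt.sub hXtInt).abs
  have hprod1 := integrable_prod_g (V := fun _ => y) hX measurable_const hint1
  have hprod2 := integrable_prod_g hX hXt hint2
  have hA : Integrable (fun z => ∫ ω, (ind (X ω) z - ind y z) ^ 2 ∂ℙ) volume :=
    hprod1.integral_prod_right
  have hB : Integrable (fun z => ∫ ω, (ind (X ω) z - ind (Xt ω) z) ^ 2 ∂ℙ) volume :=
    hprod2.integral_prod_right
  have hfub1 : ∫ ω, |X ω - y| ∂ℙ = ∫ z, ∫ ω, (ind (X ω) z - ind y z) ^ 2 ∂ℙ :=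
    fubini_g hX measurable_const hint1
  have hfub2 : ∫ ω, |X ω - Xt ω| ∂ℙ = ∫ z, ∫ ω, (ind (X ω) z - ind (Xt ω) z) ^ 2 ∂ℙ :=
    fubini_g hX hXt hint2
  have key : ∫ z, ((ℙ {ω | X ω ≤ z}).toReal - (if y < z then (1 : ℝ) else 0)) ^ 2
      = ∫ z, ((∫ ω, (ind (X ω) z - ind y z) ^ 2 ∂ℙ)
          - (1 / 2) * ∫ ω, (ind (X ω) z - ind (Xt ω) z) ^ 2 ∂ℙ) := by
    apply integral_congr_ae
    have hae : ∀ᵐ (z : ℝ), z ≠ y := by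
      rw [Filter.eventually_iff, mem_ae_iff]
      have : {z : ℝ | z ≠ y}ᶜ = {y} := by ext w; simp
      rw [this]
      exact measure_singleton y
    filter_upwards [hae] with z hz
    rw [int_one hX y z, int_two hX hXt hIndep hSameLaw z]
    have hind : (if y < z then (1 : ℝ) else 0) = ind y z := by
      unfold ind
      by_cases h : y < z
      · rw [if_pos h, if_pos h.le]
      · rw [if_neg h, if_neg (by intro h'; exact h (lt_of_le_of_ne h' (Ne.symm hz)))]
    rw [hind]; ring
  rw [key, integral_sub hA (hB.const_mul (1 / 2)), integral_const_mul, ← hfub1, ← hfub2]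
end
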